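/- Let X be a metric space, x ∈ X, and let S ⊆ X be separated by x. Let P be an uncertain point on X with weight w > 0. If the probability sum of P on S is strictly less than 1/2, then Ed(P,y) > Ed(P,x) for every y ∈ S. -/

import Mathlib

/-- The (weighted) expected distance from an uncertain point, given by weight `w`,
locations `p j` and probabilities `f j`, to a point `x`. -/
noncomputable def Ed {X : Type*} [MetricSpace X] {m : ℕ} (w : ℝ) (p : Fin m → X)
    (f : Fin m → ℝ) (x : X) : ℝ :=
  w * ∑ j, f j * dist (p j) x

open Classical in
/-- The probability sum of an uncertain point with locations `p j` and
probabilities `f j` on a set `S`. -/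
noncomputable def probSum {X : Type*} {m : ℕ} (p : Fin m → X)
    (f : Fin m → ℝ) (S : Set X) : ℝ :=
  ∑ j, if p j ∈ S then f j else 0

/-- `S` is separated by `x`: `x ∉ S` and every path from outside `S` to a point of `S`
goes through `x`, i.e. `d(p,y) = d(p,x) + d(x,y)` for `y ∈ S` and `p ∉ S`, `p ≠ x`. -/
def SeparatedBy {X : Type*} [MetricSpace X] (S : Set X) (x : X) : Prop :=
  x ∉ S ∧ ∀ y ∈ S, ∀ p : X, p ∉ S → p ≠ x → dist p y = dist p x + dist x y

open Classical in
/-- If `S ⊆ X` is separated by `x`, `P` is an uncertain point with weight `w > 0`,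
and the probability sum of `P` on `S` is strictly less than `1/2`, then
`Ed(P,y) > Ed(P,x)` for every `y ∈ S`. -/
theorem stmt_0 {X : Type*} [MetricSpace X] (x : X) (S : Set X)
    (hS : SeparatedBy S x) {m : ℕ} (w : ℝ) (hw : 0 < w)
    (p : Fin m → X) (f : Fin m → ℝ) (hf : ∀ j, 0 ≤ f j) (hsum : ∑ j, f j = 1)
    (hprob : probSum p f S < 1 / 2) :
    ∀ y ∈ S, Ed w p f x < Ed w p f y := by
  intro y hy
  set D := dist x y with hDdef
  have hyx : y ≠ x := fun h => hS.1 (h ▸ hy)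
  have hD : 0 < D := by
    rw [hDdef, dist_comm]
    exact dist_pos.mpr hyx
  have key : ∀ j, f j * (dist (p j) x + (if p j ∈ S then -D else D)) ≤ f j * dist (p j) y := by
    intro j
    apply mul_le_mul_of_nonneg_left _ (hf j)
    by_cases hmem : p j ∈ S
    · simp only [hmem, if_true]
      have := dist_triangle (p j) y x
      rw [dist_comm y x] at this
      linarith
    · simp only [hmem, if_false]
      by_cases hpx : p j = x
      · simp [hpx, hDdef]
      · rw [hS.2 y hy (p j) hmem hpx]
  have hsum_le : ∑ j, f j * (dist (p j) x + (if p j ∈ S then -D else D))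
      ≤ ∑ j, f j * dist (p j) y := Finset.sum_le_sum fun j _ => key j
  have expand : ∑ j, f j * (dist (p j) x + (if p j ∈ S then -D else D))
      = (∑ j, f j * dist (p j) x) + D * (1 - 2 * probSum p f S) := by
    rw [probSum, ← hsum, mul_sub, mul_left_comm D 2, Finset.mul_sum, Finset.mul_sum,
      Finset.mul_sum, ← Finset.sum_sub_distrib, ← Finset.sum_add_distrib]
    apply Finset.sum_congr rfl
    intro j _
    by_cases hmem : p j ∈ S <;> simp [hmem] <;> ring
  have hpos : 0 < D * (1 - 2 * probSum p f S) := by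
    apply mul_pos hD; linarith
  unfold Ed
  apply mul_lt_mul_of_pos_left _ hw
  calc ∑ j, f j * dist (p j) x
      < (∑ j, f j * dist (p j) x) + D * (1 - 2 * probSum p f S) := by linarith
    _ = ∑ j, f j * (dist (p j) x + (if p j ∈ S then -D else D)) := expand.symm
    _ ≤ ∑ j, f j * dist (p j) y := hsum_le
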